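/- Let U, V ⊆ ℂ be open, let ρ : V → ℝ be smooth and strictly positive, and let ψ : U → V be holomorphic with nowhere vanishing derivative. Then for every z ∈ U, ∂∂̄[ Real.log(ρ(ψ(z))·|ψ'(z)|²) ] = (∂∂̄[Real.log ∘ ρ])(ψ(z)) · |ψ'(z)|², where ∂ and ∂̄ are the Wirtinger derivatives. In particular ∂∂̄ log|ψ'(z)|² = 0, i.e. the curvature 2-form R^ν = ∂∂̄ log ρ of the Kähler metric ρ dz⊗dz̄ transforms by pullback under conformal transformations. -/

import Mathlib

/-- The Wirtinger derivative ∂F(p) = ½(DF(p)(1) − i·DF(p)(i)) of a function F : ℂ → ℂ,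
where DF(p) is the real Fréchet derivative of F at p. -/
noncomputable def wirtP (F : ℂ → ℂ) (p : ℂ) : ℂ :=
  (1 / 2 : ℂ) * (fderiv ℝ F p 1 - Complex.I * fderiv ℝ F p Complex.I)

/-- The conjugate Wirtinger derivative ∂̄F(p) = ½(DF(p)(1) + i·DF(p)(i)). -/
noncomputable def wirtM (F : ℂ → ℂ) (p : ℂ) : ℂ :=
  (1 / 2 : ℂ) * (fderiv ℝ F p 1 + Complex.I * fderiv ℝ F p Complex.I)

open Complex

private lemma clm_decomp (L : ℂ →L[ℝ] ℂ) (v : ℂ) :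
    L v = (v.re : ℂ) * L 1 + (v.im : ℂ) * L I := by
  have hv : v = (v.re : ℝ) • (1 : ℂ) + (v.im : ℝ) • I := by
    simp [Complex.real_smul, Complex.re_add_im]
  conv_lhs => rw [hv]
  rw [map_add, map_smul, map_smul]
  simp [Complex.real_smul]

private lemma fderiv_real_of_complex {f : ℂ → ℂ} {z : ℂ} (hf : DifferentiableAt ℂ f z) (v : ℂ) :
    fderiv ℝ f z v = deriv f z * v := by
  rw [(hf.hasFDerivAt.restrictScalars ℝ).fderiv]
  calc ((fderiv ℂ f z).restrictScalars ℝ) v = (fderiv ℂ f z) v := rfl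
    _ = (fderiv ℂ f z) (v • 1) := by rw [smul_eq_mul, mul_one]
    _ = v • (fderiv ℂ f z) 1 := map_smul _ _ _
    _ = deriv f z * v := mul_comm _ _

private lemma fderiv_conj_of_complex {f : ℂ → ℂ} {z : ℂ} (hf : DifferentiableAt ℂ f z) (v : ℂ) :
    fderiv ℝ (fun w => (starRingEnd ℂ) (f w)) z v = (starRingEnd ℂ) (deriv f z * v) := by
  have h : HasFDerivAt (fun w => (starRingEnd ℂ) (f w))
      ((Complex.conjCLE : ℂ →L[ℝ] ℂ).comp ((fderiv ℂ f z).restrictScalars ℝ)) z :=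
    (Complex.conjCLE : ℂ →L[ℝ] ℂ).hasFDerivAt.comp z (hf.hasFDerivAt.restrictScalars ℝ)
  rw [h.fderiv]
  have key : (fderiv ℂ f z) v = deriv f z * v := by
    calc (fderiv ℂ f z) v = (fderiv ℂ f z) (v • 1) := by rw [smul_eq_mul, mul_one]
      _ = v • (fderiv ℂ f z) 1 := map_smul _ _ _
      _ = deriv f z * v := mul_comm _ _
  calc ((Complex.conjCLE : ℂ →L[ℝ] ℂ).comp ((fderiv ℂ f z).restrictScalars ℝ)) v
      = (starRingEnd ℂ) ((fderiv ℂ f z) v) := rfl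
    _ = (starRingEnd ℂ) (deriv f z * v) := by rw [key]

private lemma wirtM_holo {f : ℂ → ℂ} {z : ℂ} (hf : DifferentiableAt ℂ f z) : wirtM f z = 0 := by
  simp only [wirtM, fderiv_real_of_complex hf]
  linear_combination (deriv f z / 2) * Complex.I_sq

private lemma wirtP_holo {f : ℂ → ℂ} {z : ℂ} (hf : DifferentiableAt ℂ f z) :
    wirtP f z = deriv f z := by
  simp only [wirtP, fderiv_real_of_complex hf]
  linear_combination (-(deriv f z) / 2) * Complex.I_sq

private lemma wirtM_conj {f : ℂ → ℂ} {z : ℂ} (hf : DifferentiableAt ℂ f z) :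
    wirtM (fun w => (starRingEnd ℂ) (f w)) z = (starRingEnd ℂ) (deriv f z) := by
  simp only [wirtM, fderiv_conj_of_complex hf, map_mul, Complex.conj_I, mul_one]
  linear_combination (-(starRingEnd ℂ) (deriv f z) / 2) * Complex.I_sq

private lemma wirtP_conj {f : ℂ → ℂ} {z : ℂ} (hf : DifferentiableAt ℂ f z) :
    wirtP (fun w => (starRingEnd ℂ) (f w)) z = 0 := by
  simp only [wirtP, fderiv_conj_of_complex hf, map_mul, Complex.conj_I, mul_one]
  linear_combination ((starRingEnd ℂ) (deriv f z) / 2) * Complex.I_sq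

private lemma wirtM_congr {f g : ℂ → ℂ} {z : ℂ} (h : f =ᶠ[nhds z] g) : wirtM f z = wirtM g z := by
  unfold wirtM; rw [h.fderiv_eq]

private lemma wirtP_congr {f g : ℂ → ℂ} {z : ℂ} (h : f =ᶠ[nhds z] g) : wirtP f z = wirtP g z := by
  unfold wirtP; rw [h.fderiv_eq]

private lemma wirtM_add {f g : ℂ → ℂ} {z : ℂ} (hf : DifferentiableAt ℝ f z)
    (hg : DifferentiableAt ℝ g z) :
    wirtM (fun w => f w + g w) z = wirtM f z + wirtM g z := by
  simp only [wirtM, fderiv_fun_add hf hg, ContinuousLinearMap.add_apply]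
  ring

private lemma wirtP_add {f g : ℂ → ℂ} {z : ℂ} (hf : DifferentiableAt ℝ f z)
    (hg : DifferentiableAt ℝ g z) :
    wirtP (fun w => f w + g w) z = wirtP f z + wirtP g z := by
  simp only [wirtP, fderiv_fun_add hf hg, ContinuousLinearMap.add_apply]
  ring

private lemma wirtM_const (c z : ℂ) : wirtM (fun _ => c) z = 0 := by
  simp [wirtM, fderiv_const]

private lemma wirtP_mul {f g : ℂ → ℂ} {z : ℂ} (hf : DifferentiableAt ℝ f z)
    (hg : DifferentiableAt ℝ g z) :
    wirtP (fun w => f w * g w) z = wirtP f z * g z + f z * wirtP g z := by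
  simp only [wirtP, fderiv_fun_mul hf hg, ContinuousLinearMap.add_apply,
    ContinuousLinearMap.smul_apply, smul_eq_mul]
  ring

private lemma conj_eq' (c : ℂ) : (starRingEnd ℂ) c = (c.re : ℂ) - (c.im : ℂ) * I := by
  apply Complex.ext <;> simp

private lemma wirt_comp_aux {G ψ : ℂ → ℂ} {z : ℂ} (hG : DifferentiableAt ℝ G (ψ z))
    (hψ : DifferentiableAt ℂ ψ z) (v : ℂ) :
    fderiv ℝ (fun w => G (ψ w)) z v = fderiv ℝ G (ψ z) (deriv ψ z * v) := by
  have h : fderiv ℝ (G ∘ ψ) z = (fderiv ℝ G (ψ z)).comp (fderiv ℝ ψ z) :=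
    fderiv_comp z hG (hψ.restrictScalars ℝ)
  have h2 : fderiv ℝ ψ z v = deriv ψ z * v := fderiv_real_of_complex hψ v
  calc fderiv ℝ (fun w => G (ψ w)) z v = ((fderiv ℝ G (ψ z)).comp (fderiv ℝ ψ z)) v := by
        rw [← h]; rfl
    _ = fderiv ℝ G (ψ z) (fderiv ℝ ψ z v) := rfl
    _ = fderiv ℝ G (ψ z) (deriv ψ z * v) := by rw [h2]

private lemma wirtM_comp {G ψ : ℂ → ℂ} {z : ℂ} (hG : DifferentiableAt ℝ G (ψ z))
    (hψ : DifferentiableAt ℂ ψ z) :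
    wirtM (fun w => G (ψ w)) z = wirtM G (ψ z) * (starRingEnd ℂ) (deriv ψ z) := by
  simp only [wirtM, wirt_comp_aux hG hψ, mul_one]
  rw [clm_decomp (fderiv ℝ G (ψ z)) (deriv ψ z), clm_decomp (fderiv ℝ G (ψ z)) (deriv ψ z * I),
    conj_eq']
  set a := fderiv ℝ G (ψ z) 1
  set b := fderiv ℝ G (ψ z) I
  set c := deriv ψ z
  have hre : ((c * I).re : ℂ) = -(c.im : ℂ) := by simp [Complex.mul_re]
  have him : ((c * I).im : ℂ) = (c.re : ℂ) := by simp [Complex.mul_im]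
  rw [hre, him]
  linear_combination ((c.im : ℂ) * b / 2) * Complex.I_sq

private lemma wirtP_comp {G ψ : ℂ → ℂ} {z : ℂ} (hG : DifferentiableAt ℝ G (ψ z))
    (hψ : DifferentiableAt ℂ ψ z) :
    wirtP (fun w => G (ψ w)) z = wirtP G (ψ z) * deriv ψ z := by
  simp only [wirtP, wirt_comp_aux hG hψ, mul_one]
  rw [clm_decomp (fderiv ℝ G (ψ z)) (deriv ψ z), clm_decomp (fderiv ℝ G (ψ z)) (deriv ψ z * I)]
  set a := fderiv ℝ G (ψ z) 1
  set b := fderiv ℝ G (ψ z) I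
  set c := deriv ψ z
  have hre : ((c * I).re : ℂ) = -(c.im : ℂ) := by simp [Complex.mul_re]
  have him : ((c * I).im : ℂ) = (c.re : ℂ) := by simp [Complex.mul_im]
  rw [hre, him]
  have hc : c = (c.re : ℂ) + (c.im : ℂ) * I := (Complex.re_add_im c).symm
  conv_rhs => rw [hc]
  linear_combination ((c.im : ℂ) * b / 2) * Complex.I_sq

private lemma logAbsSq (d : ℂ) :
    ((Real.log (‖d‖ ^ 2) : ℝ) : ℂ)
      = Complex.log d + (starRingEnd ℂ) (Complex.log d) := by
  have h1 : Complex.log d = ((Real.log (‖d‖) : ℝ) : ℂ) + (d.arg : ℂ) * I := rfl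
  rw [h1]
  have h2 : Real.log (‖d‖ ^ 2) = 2 * Real.log (‖d‖) := by
    rw [Real.log_pow]; push_cast; ring
  rw [h2, map_add, map_mul, Complex.conj_I, Complex.conj_ofReal, Complex.conj_ofReal]
  push_cast
  ring

/-- Conformal transformation rule of the curvature R^ν = ∂∂̄ log ρ of the Kähler
metric ρ dz⊗dz̄: for ρ smooth and positive on V and ψ : U → V holomorphic with
nowhere vanishing derivative, ∂∂̄ log(ρ(ψ(z))·|ψ'(z)|²) = (∂∂̄ log ρ)(ψ(z))·|ψ'(z)|²
for every z ∈ U; in particular ∂∂̄ log|ψ'(z)|² = 0. -/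
theorem stmt17 (U V : Set ℂ) (hU : IsOpen U) (hV : IsOpen V)
    (ρ : ℂ → ℝ) (hρ : ContDiffOn ℝ (⊤ : ℕ∞) ρ V) (hρpos : ∀ z ∈ V, 0 < ρ z)
    (ψ : ℂ → ℂ) (hψ : DifferentiableOn ℂ ψ U) (hm : Set.MapsTo ψ U V)
    (hne : ∀ z ∈ U, deriv ψ z ≠ 0) :
    (∀ z ∈ U,
      wirtP (wirtM fun w => (Real.log (ρ (ψ w) * ‖deriv ψ w‖ ^ 2) : ℂ)) z
        = wirtP (wirtM fun w => (Real.log (ρ w) : ℂ)) (ψ z)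
            * ((‖deriv ψ z‖ ^ 2 : ℝ) : ℂ)) ∧
      ∀ z ∈ U,
        wirtP (wirtM fun w => (Real.log (‖deriv ψ w‖ ^ 2) : ℂ)) z = 0 := by
  have hψa : AnalyticOnNhd ℂ ψ U := hψ.analyticOnNhd hU
  have hda : AnalyticOnNhd ℂ (deriv ψ) U := hψa.deriv
  have hdda : AnalyticOnNhd ℂ (deriv (deriv ψ)) U := hda.deriv
  set L : ℂ → ℂ := fun w => ((Real.log (ρ w) : ℝ) : ℂ) with hLdef
  have hLcd : ContDiffOn ℝ (⊤ : ℕ∞) L V := by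
    have h1 : ContDiffOn ℝ (⊤ : ℕ∞) (fun w => Real.log (ρ w)) V :=
      hρ.log (fun x hx => (hρpos x hx).ne')
    exact Complex.ofRealCLM.contDiff.comp_contDiffOn h1
  have hLd : ∀ w ∈ V, DifferentiableAt ℝ L w := fun w hw =>
    (hLcd.differentiableOn (by simp)).differentiableAt (hV.mem_nhds hw)
  have hMd : ∀ w ∈ V, DifferentiableAt ℝ (wirtM L) w := by
    intro w hw
    have hfd : ContDiffOn ℝ (⊤ : ℕ∞) (fun w => fderiv ℝ L w) V :=
      hLcd.fderiv_of_isOpen hV (by norm_cast)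
    have h1 : DifferentiableAt ℝ (fun w => fderiv ℝ L w) w :=
      (hfd.differentiableOn (by simp)).differentiableAt (hV.mem_nhds hw)
    have h2 : DifferentiableAt ℝ (fun w => fderiv ℝ L w 1) w :=
      h1.clm_apply (differentiableAt_const _)
    have h3 : DifferentiableAt ℝ (fun w => fderiv ℝ L w Complex.I) w :=
      h1.clm_apply (differentiableAt_const _)
    exact (differentiableAt_const _).mul (h2.add ((differentiableAt_const _).mul h3))
  have main : ∀ z ∈ U,
      (wirtP (wirtM fun w => (Real.log (ρ (ψ w) * ‖deriv ψ w‖ ^ 2) : ℂ)) z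
        = wirtP (wirtM L) (ψ z) * ((‖deriv ψ z‖ ^ 2 : ℝ) : ℂ)) ∧
      wirtP (wirtM fun w => (Real.log (‖deriv ψ w‖ ^ 2) : ℂ)) z = 0 := by
    intro z hz
    set c := deriv ψ z with hcdef
    have hc0 : c ≠ 0 := hne z hz
    set u : ℂ → ℂ := fun w => c⁻¹ * deriv ψ w with hudef
    have huz : u z = 1 := inv_mul_cancel₀ hc0
    set S : Set ℂ := {w | w ∈ U ∧ u w ∈ Complex.slitPlane} with hSdef
    have hSopen : IsOpen S := by
      rw [isOpen_iff_mem_nhds]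
      intro w hw
      have hucont : ContinuousAt u w :=
        continuousAt_const.mul ((hda w hw.1).differentiableAt.continuousAt)
      have h1 : ∀ᶠ x in nhds w, x ∈ U := hU.mem_nhds hw.1
      have h2 : ∀ᶠ x in nhds w, u x ∈ Complex.slitPlane :=
        hucont.eventually_mem (Complex.isOpen_slitPlane.mem_nhds hw.2)
      filter_upwards [h1, h2] with x hx1 hx2 using ⟨hx1, hx2⟩
    have hzS : z ∈ S := ⟨hz, by rw [huz]; exact Complex.one_mem_slitPlane⟩
    set f₂ : ℂ → ℂ := fun w => Complex.log (u w) with hf2def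
    set g : ℂ → ℂ := fun w => (u w)⁻¹ * (c⁻¹ * deriv (deriv ψ) w) with hgdef
    set K : ℂ := ((Real.log (‖c‖ ^ 2) : ℝ) : ℂ) with hKdef
    -- pointwise facts on S
    have hptd : ∀ w ∈ S, DifferentiableAt ℂ f₂ w ∧ deriv f₂ w = g w := by
      intro w hw
      have hdw : DifferentiableAt ℂ (deriv ψ) w := (hda w hw.1).differentiableAt
      have huw : DifferentiableAt ℂ u w := hdw.const_mul c⁻¹
      have hf2' : HasDerivAt f₂ ((u w)⁻¹ * deriv u w) w :=
        (Complex.hasDerivAt_log hw.2).comp w huw.hasDerivAt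
      have hderu : deriv u w = c⁻¹ * deriv (deriv ψ) w := deriv_const_mul _ hdw
      exact ⟨hf2'.differentiableAt, by rw [hf2'.deriv, hderu]⟩
    -- decomposition of log |ψ'|²
    have hdecG : ∀ w ∈ S, ((Real.log (‖deriv ψ w‖ ^ 2) : ℝ) : ℂ)
        = f₂ w + ((starRingEnd ℂ) (f₂ w) + K) := by
      intro w hw
      have hu0 : u w ≠ 0 := Complex.slitPlane_ne_zero hw.2
      have hdw : deriv ψ w = c * u w := by
        rw [hudef]; field_simp
      have habs : ‖deriv ψ w‖ ^ 2 = ‖c‖ ^ 2 * ‖u w‖ ^ 2 := by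
        rw [hdw, norm_mul, mul_pow]
      have hca : ‖c‖ ^ 2 ≠ 0 := pow_ne_zero _ ((norm_ne_zero_iff).mpr hc0)
      have hua : ‖u w‖ ^ 2 ≠ 0 := pow_ne_zero _ ((norm_ne_zero_iff).mpr hu0)
      rw [habs, Real.log_mul hca hua]
      push_cast
      rw [logAbsSq (u w)]
      ring
    -- wirtM of log |ψ'|² on S
    have hMG : ∀ w ∈ S,
        wirtM (fun x => ((Real.log (‖deriv ψ x‖ ^ 2) : ℝ) : ℂ)) w
          = (starRingEnd ℂ) (g w) := by
      intro w hw
      obtain ⟨hf2d, hf2g⟩ := hptd w hw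
      have heq : (fun x => ((Real.log (‖deriv ψ x‖ ^ 2) : ℝ) : ℂ))
          =ᶠ[nhds w] fun x => f₂ x + ((starRingEnd ℂ) (f₂ x) + K) := by
        filter_upwards [hSopen.mem_nhds hw] with x hx using hdecG x hx
      rw [wirtM_congr heq]
      have hconjd : DifferentiableAt ℝ (fun x => (starRingEnd ℂ) (f₂ x)) w :=
        Complex.conjCLE.differentiableAt.comp w (hf2d.restrictScalars ℝ)
      rw [wirtM_add (hf2d.restrictScalars ℝ) (hconjd.fun_add (differentiableAt_const _)),
        wirtM_add hconjd (differentiableAt_const _), wirtM_holo hf2d, wirtM_conj hf2d,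
        wirtM_const, hf2g]
      ring
    -- differentiability of g at z
    have hgz : DifferentiableAt ℂ g z := by
      have huzd : DifferentiableAt ℂ u z := ((hda z hz).differentiableAt).const_mul c⁻¹
      have hu0 : u z ≠ 0 := by rw [huz]; exact one_ne_zero
      exact (huzd.inv hu0).mul (((hdda z hz).differentiableAt).const_mul c⁻¹)
    -- claim 2
    have claim2 : wirtP (wirtM fun w => (Real.log (‖deriv ψ w‖ ^ 2) : ℂ)) z = 0 := by
      have heq : wirtM (fun w => ((Real.log (‖deriv ψ w‖ ^ 2) : ℝ) : ℂ))
          =ᶠ[nhds z] fun w => (starRingEnd ℂ) (g w) := by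
        filter_upwards [hSopen.mem_nhds hzS] with w hw using hMG w hw
      rw [wirtP_congr heq]
      exact wirtP_conj hgz
    refine ⟨?_, claim2⟩
    -- claim 1
    have hdecF : ∀ w ∈ S, ((Real.log (ρ (ψ w) * ‖deriv ψ w‖ ^ 2) : ℝ) : ℂ)
        = L (ψ w) + (f₂ w + ((starRingEnd ℂ) (f₂ w) + K)) := by
      intro w hw
      have hρp : ρ (ψ w) ≠ 0 := (hρpos _ (hm hw.1)).ne'
      have hu0 : u w ≠ 0 := Complex.slitPlane_ne_zero hw.2
      have hdw0 : deriv ψ w ≠ 0 := by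
        intro h
        apply hu0
        rw [hudef]; simp [h]
      have hda2 : ‖deriv ψ w‖ ^ 2 ≠ 0 :=
        pow_ne_zero _ ((norm_ne_zero_iff).mpr hdw0)
      rw [Real.log_mul hρp hda2]
      push_cast
      rw [show ((Real.log (‖deriv ψ w‖ ^ 2) : ℝ) : ℂ)
          = f₂ w + ((starRingEnd ℂ) (f₂ w) + K) from hdecG w hw]
    have hMF : ∀ w ∈ S,
        wirtM (fun x => ((Real.log (ρ (ψ x) * ‖deriv ψ x‖ ^ 2) : ℝ) : ℂ)) w
          = wirtM L (ψ w) * (starRingEnd ℂ) (deriv ψ w) + (starRingEnd ℂ) (g w) := by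
      intro w hw
      obtain ⟨hf2d, hf2g⟩ := hptd w hw
      have hψw : DifferentiableAt ℂ ψ w := (hψa w hw.1).differentiableAt
      have hLψw : DifferentiableAt ℝ L (ψ w) := hLd _ (hm hw.1)
      have hLψd : DifferentiableAt ℝ (fun x => L (ψ x)) w :=
        hLψw.comp w (hψw.restrictScalars ℝ)
      have hconjd : DifferentiableAt ℝ (fun x => (starRingEnd ℂ) (f₂ x)) w :=
        Complex.conjCLE.differentiableAt.comp w (hf2d.restrictScalars ℝ)
      have heq : (fun x => ((Real.log (ρ (ψ x) * ‖deriv ψ x‖ ^ 2) : ℝ) : ℂ))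
          =ᶠ[nhds w] fun x => L (ψ x) + (f₂ x + ((starRingEnd ℂ) (f₂ x) + K)) := by
        filter_upwards [hSopen.mem_nhds hw] with x hx using hdecF x hx
      rw [wirtM_congr heq,
        wirtM_add hLψd ((hf2d.restrictScalars ℝ).fun_add (hconjd.fun_add (differentiableAt_const _))),
        wirtM_add (hf2d.restrictScalars ℝ) (hconjd.fun_add (differentiableAt_const _)),
        wirtM_add hconjd (differentiableAt_const _), wirtM_holo hf2d, wirtM_conj hf2d,
        wirtM_const, wirtM_comp hLψw hψw, hf2g]
      ring
    have hψz : DifferentiableAt ℂ ψ z := (hψa z hz).differentiableAt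
    have hdz : DifferentiableAt ℂ (deriv ψ) z := (hda z hz).differentiableAt
    have hA : DifferentiableAt ℝ (fun w => wirtM L (ψ w)) z :=
      (hMd _ (hm hz)).comp z (hψz.restrictScalars ℝ)
    have hB : DifferentiableAt ℝ (fun w => (starRingEnd ℂ) (deriv ψ w)) z :=
      Complex.conjCLE.differentiableAt.comp z (hdz.restrictScalars ℝ)
    have hC : DifferentiableAt ℝ (fun w => (starRingEnd ℂ) (g w)) z :=
      Complex.conjCLE.differentiableAt.comp z (hgz.restrictScalars ℝ)
    have heq : wirtM (fun w => ((Real.log (ρ (ψ w) * ‖deriv ψ w‖ ^ 2) : ℝ) : ℂ))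
        =ᶠ[nhds z] fun w => wirtM L (ψ w) * (starRingEnd ℂ) (deriv ψ w)
          + (starRingEnd ℂ) (g w) := by
      filter_upwards [hSopen.mem_nhds hzS] with w hw using hMF w hw
    rw [wirtP_congr heq, wirtP_add (hA.fun_mul hB) hC, wirtP_mul hA hB,
      wirtP_comp (hMd _ (hm hz)) hψz, wirtP_conj hdz, wirtP_conj hgz]
    have habs : c * (starRingEnd ℂ) c = ((‖c‖ ^ 2 : ℝ) : ℂ) := by
      rw [Complex.mul_conj, Complex.sq_norm]
    rw [← hcdef, ← habs]
    ring
  exact ⟨fun z hz => (main z hz).1, fun z hz => (main z hz).2⟩
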